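/- In a T-tiling of an H × W rectangle where T is deterministic with color partition Col ⊔ Col', all tiles in the same row have their top colors on the same side of the partition: for each row i, either up(τ(i,j)) ∈ Col for all j, or up(τ(i,j)) ∈ Col' for all j. -/

import Mathlib

structure Tile (C : Type) where
  left : C
  up : C
  right : C
  down : C
deriving DecidableEq

/-- A `T`-tiling of the `H × W` rectangle: all tiles are from `T`, the borders are
white on all four sides, and adjacent tiles match horizontally and vertically. -/
def IsTiling {C : Type} (white : C) (T : Finset (Tile C)) (H W : ℕ)
    (τ : Fin H → Fin W → Tile C) : Prop :=
  (∀ i j, τ i j ∈ T) ∧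
  (∀ i j, j.val = 0 → (τ i j).left = white) ∧
  (∀ i j, j.val = W - 1 → (τ i j).right = white) ∧
  (∀ i j, i.val = 0 → (τ i j).up = white) ∧
  (∀ i j, i.val = H - 1 → (τ i j).down = white) ∧
  (∀ (i : Fin H) (j : Fin W) (h : j.val + 1 < W),
      (τ i j).right = (τ i ⟨j.val + 1, h⟩).left) ∧
  (∀ (i : Fin H) (j : Fin W) (h : i.val + 1 < H),
      (τ i j).down = (τ ⟨i.val + 1, h⟩ j).up)

/-- A `T`-tiling of the `h × 1` rectangle (a single column): left/right colors of all
tiles are white, top of the first and bottom of the last tile are white, and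
consecutive tiles match vertically. -/
def IsColTiling {C : Type} (white : C) (T : Finset (Tile C)) (h : ℕ)
    (τ : Fin h → Tile C) : Prop :=
  (∀ i, τ i ∈ T) ∧
  (∀ i : Fin h, i.val = 0 → (τ i).up = white) ∧
  (∀ i : Fin h, i.val = h - 1 → (τ i).down = white) ∧
  (∀ i, (τ i).left = white) ∧
  (∀ i, (τ i).right = white) ∧
  (∀ (i : Fin h) (hlt : i.val + 1 < h), (τ i).down = (τ ⟨i.val + 1, hlt⟩).up)

/-- A deterministic set of tile types: there is a partition of the colors
`C = Col ⊔ Colᶜ` with `white ∈ Col` such that tops and bottoms of tiles lie on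
opposite sides, and a tile is determined by its (left,up) colors when its left
color is in `Col`, and by its (right,up) colors when its right color is in `Colᶜ`. -/
def Deterministic {C : Type} (white : C) (T : Finset (Tile C)) : Prop :=
  ∃ Col : Set C, white ∈ Col ∧
    (∀ t ∈ T, (t.up ∈ Col ↔ t.down ∉ Col)) ∧
    (∀ c ∈ Col, ∀ c' : C, ∀ t ∈ T, ∀ t' ∈ T,
       t.left = c → t.up = c' → t'.left = c → t'.up = c' → t = t') ∧
    (∀ c ∉ Col, ∀ c' : C, ∀ t ∈ T, ∀ t' ∈ T,
       t.right = c → t.up = c' → t'.right = c → t'.up = c' → t = t')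

/-- In a tiling with a deterministic tile set with partition Col ⊔ Colᶜ, the top
colors of all tiles in a given row lie on the same side of the partition. -/
theorem deterministic_row_constant {C : Type} [DecidableEq C]
    (white : C) (T : Finset (Tile C)) (Col : Set C) (hwhite : white ∈ Col)
    (h1 : ∀ t ∈ T, (t.up ∈ Col ↔ t.down ∉ Col))
    (h2 : ∀ c ∈ Col, ∀ c' : C, ∀ t ∈ T, ∀ t' ∈ T,
       t.left = c → t.up = c' → t'.left = c → t'.up = c' → t = t')
    (h3 : ∀ c ∉ Col, ∀ c' : C, ∀ t ∈ T, ∀ t' ∈ T,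
       t.right = c → t.up = c' → t'.right = c → t'.up = c' → t = t')
    (H W : ℕ) (τ : Fin H → Fin W → Tile C) (ht : IsTiling white T H W τ) :
    ∀ i : Fin H, (∀ j, (τ i j).up ∈ Col) ∨ (∀ j, (τ i j).up ∉ Col) := by
  obtain ⟨hmem, _, _, htop, _, _, hvert⟩ := ht
  have key : ∀ n : ℕ, ∀ (i : Fin H) (j : Fin W), i.val = n →
      ((τ i j).up ∈ Col ↔ Even i.val) := by
    intro n
    induction n with
    | zero =>
      intro i j hi
      rw [hi]
      simp only [Even.zero, iff_true]
      rw [htop i j hi]; exact hwhite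
    | succ m ih =>
      intro i j hi
      have hm : m + 1 < H := hi ▸ i.isLt
      have hm' : m < H := Nat.lt_of_succ_lt hm
      set i' : Fin H := ⟨m, hm'⟩
      have hi2 : i = ⟨m + 1, hm⟩ := Fin.ext hi
      have hv := hvert i' j hm
      have hprev := ih i' j rfl
      have h1' := h1 (τ i' j) (hmem i' j)
      rw [hi2]
      have : (τ i ⟨j.val, j.isLt⟩).up = (τ i' j).down := by
        rw [hi2]; rw [← hv]
      constructor
      · intro hc
        rw [Nat.even_add_one]
        have hd : (τ i' j).down ∈ Col := by rwa [hv]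
        intro hev
        have := hprev.mpr hev
        exact (h1'.mp this) hd
      · intro hev
        rw [Nat.even_add_one] at hev
        have hup : (τ i' j).up ∉ Col := fun h => hev (hprev.mp h)
        have hd : (τ i' j).down ∈ Col := by
          by_contra hnd
          exact hup (h1'.mpr hnd)
        rw [show τ ⟨m+1, hm⟩ j = τ i j from by rw [hi2], hi2, ← hv]
        exact hd
  intro i
  by_cases hev : Even i.val
  · left; intro j; exact (key i.val i j rfl).mpr hev
  · right; intro j; exact fun h => hev ((key i.val i j rfl).mp h)
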